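/- Deterministic-MDP version of the value difference with shaped rewards: let V^π and V'^π denote the value functions of policy π under reward r and shaped reward r'(x,u) = r(x,u) + γΦ(f(x,u)) − Φ(x) respectively, in a deterministic infinite-horizon discounted MDP. Then V'^π(x) = V^π(x) − Φ(x) for every state x, and hence argmax_π V'^π(x) = argmax_π V^π(x) for every x (the optimal policy is unchanged). -/

import Mathlib

/-- Trajectory of a deterministic stationary policy `π` from state `x`. -/
def trajP {X U : Type*} (f : X → U → X) (π : X → U) (x : X) : ℕ → X
  | 0 => x
  | t + 1 => f (trajP f π x t) (π (trajP f π x t))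

/-- Infinite-horizon discounted value of policy `π` from state `x` under reward `r`. -/
noncomputable def Vval {X U : Type*} (γ : ℝ) (f : X → U → X) (r : X → U → ℝ)
    (π : X → U) (x : X) : ℝ :=
  ∑' t : ℕ, γ ^ t * r (trajP f π x t) (π (trajP f π x t))

lemma summable_geom_bdd {γ : ℝ} (hγ0 : 0 ≤ γ) (hγ1 : γ < 1) (h : ℕ → ℝ) (M : ℝ)
    (hM : ∀ t, |h t| ≤ M) : Summable (fun t => γ ^ t * h t) := by
  refine Summable.of_norm_bounded
    ((summable_geometric_of_lt_one hγ0 hγ1).mul_left M) (fun t => ?_)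
  rw [Real.norm_eq_abs, abs_mul, abs_pow, abs_of_nonneg hγ0, mul_comm]
  exact mul_le_mul_of_nonneg_right (hM t) (pow_nonneg hγ0 t)

theorem potential_shaping_invariance
    {X U : Type*} (γ : ℝ) (hγ : γ ∈ Set.Ioo (0:ℝ) 1)
    (f : X → U → X) (r r' : X → U → ℝ) (Φ : X → ℝ)
    (Mr : ℝ) (hr : ∀ x u, |r x u| ≤ Mr)
    (MΦ : ℝ) (hΦ : ∀ x, |Φ x| ≤ MΦ)
    (hr' : ∀ x u, r' x u = r x u + γ * Φ (f x u) - Φ x) :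
    (∀ (π : X → U) (x : X), Vval γ f r' π x = Vval γ f r π x - Φ x) ∧
    (∀ (x : X) (π : X → U),
      (∀ π'' : X → U, Vval γ f r π'' x ≤ Vval γ f r π x) ↔
      (∀ π'' : X → U, Vval γ f r' π'' x ≤ Vval γ f r' π x)) := by
  obtain ⟨hγ0, hγ1⟩ := hγ
  have hγ0' : (0:ℝ) ≤ γ := le_of_lt hγ0
  have main : ∀ (π : X → U) (x : X), Vval γ f r' π x = Vval γ f r π x - Φ x := by
    intro π x
    set T := trajP f π x with hT
    set g : ℕ → ℝ := fun t => γ ^ t * Φ (T t) with hg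
    have hS1 : Summable (fun t => γ ^ t * r (T t) (π (T t))) :=
      summable_geom_bdd hγ0' hγ1 _ Mr (fun t => hr _ _)
    have hS2 : Summable g := summable_geom_bdd hγ0' hγ1 _ MΦ (fun t => hΦ _)
    have hS3 : Summable (fun t => g (t + 1)) := by
      rwa [summable_nat_add_iff 1]
    have hkey : ∀ t, γ ^ t * r' (T t) (π (T t)) =
        γ ^ t * r (T t) (π (T t)) + g (t + 1) - g t := by
      intro t
      rw [hr']
      have : T (t + 1) = f (T t) (π (T t)) := rfl
      simp only [hg, this]
      ring
    have : Vval γ f r' π x =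
        ∑' t, (γ ^ t * r (T t) (π (T t)) + g (t + 1) - g t) := by
      unfold Vval
      exact tsum_congr hkey
    rw [this]
    rw [Summable.tsum_sub (hS1.add hS3) hS2, Summable.tsum_add hS1 hS3]
    have htel : ∑' t, g (t + 1) = (∑' t, g t) - g 0 := by
      have := Summable.tsum_eq_zero_add hS2
      linarith [this]
    rw [htel]
    have hg0 : g 0 = Φ x := by simp [hg, hT, trajP]
    rw [hg0]
    unfold Vval
    ring
  refine ⟨main, fun x π => ?_⟩
  constructor <;> intro h π'' <;> have := h π'' <;>
    simp only [main] at * <;> linarith
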